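/- Let c be an alternating cyclic sequence over {capL, capR, cupL, cupR} (caps and cups alternate) with turning number T(c) = +2 or -2. Then c can be reduced to a cycle of length 2 (either (capR, cupL) or (capL, cupR)) by repeatedly deleting a cyclically adjacent pair consisting of one element of turning number +1 and one of turning number -1, where each deletion preserves the alternation property and the turning number. -/

import Mathlib

inductive CapCup : Type
  | capL | capR | cupL | cupR
deriving DecidableEq

def CapCup.isCap : CapCup → Bool
  | .capL => true
  | .capR => true
  | .cupL => false
  | .cupR => false

def CapCup.turn : CapCup → ℤ
  | .capR => 1
  | .capL => -1
  | .cupR => -1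
  | .cupL => 1

/-- One reduction step: delete a cyclically adjacent pair of elements whose
turning numbers are `+1` and `-1` (in some order).  The second disjunct handles
the wrap-around pair formed by the last and first elements of the list. -/
def delStep (c c' : List CapCup) : Prop :=
  (∃ (l r : List CapCup) (x y : CapCup), x.turn + y.turn = 0 ∧
      c = l ++ x :: y :: r ∧ c' = l ++ r) ∨
  (∃ (m : List CapCup) (x y : CapCup), x.turn + y.turn = 0 ∧
      c = y :: (m ++ [x]) ∧ c' = m)

lemma CapCup.turn_pm (a : CapCup) : a.turn = 1 ∨ a.turn = -1 := by
  cases a <;> simp [CapCup.turn]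

/-- Either some adjacent pair has opposite turning numbers, or all turning
numbers in the list agree. -/
lemma pairs_or_const : ∀ c : List CapCup,
    (∃ (l r : List CapCup) (x y : CapCup), x.turn + y.turn = 0 ∧
      c = l ++ x :: y :: r) ∨
    (∀ a ∈ c, ∀ b ∈ c, a.turn = b.turn) := by
  intro c
  induction c with
  | nil => right; simp
  | cons a t ih =>
    match t, ih with
    | [], _ => right; simp
    | b :: t, ih =>
      by_cases h : a.turn + b.turn = 0
      · exact Or.inl ⟨[], t, a, b, h, rfl⟩
      · rcases ih with ⟨l, r, x, y, hxy, heq⟩ | hc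
        · exact Or.inl ⟨a :: l, r, x, y, hxy, by rw [heq]; rfl⟩
        · right
          have hab : a.turn = b.turn := by
            rcases a.turn_pm with h1 | h1 <;> rcases b.turn_pm with h2 | h2 <;> omega
          have key : ∀ u ∈ a :: b :: t, u.turn = b.turn := by
            intro u hu
            rcases List.mem_cons.1 hu with rfl | hu
            · exact hab
            · exact hc u hu b (List.mem_cons_self)
          intro u hu v hv
          rw [key u hu, key v hv]

abbrev altRel (a b : CapCup) : Prop := a.isCap ≠ b.isCap

lemma chain'_del (l r : List CapCup) (x y : CapCup)
    (h : (l ++ x :: y :: r).IsChain altRel) : (l ++ r).IsChain altRel := by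
  rw [List.isChain_append] at h ⊢
  obtain ⟨hl, hm, hlm⟩ := h
  obtain ⟨h2, hm2⟩ := List.isChain_cons_cons.1 hm
  obtain ⟨hyr, hr⟩ := List.isChain_cons.1 hm2
  refine ⟨hl, hr, ?_⟩
  intro a ha b hb
  have h1 : altRel a x := hlm a ha x rfl
  have h3 : altRel y b := hyr b hb
  simp only [altRel, Ne] at h1 h2 h3 ⊢
  revert h1 h2 h3
  cases a.isCap <;> cases x.isCap <;> cases y.isCap <;> cases b.isCap <;> simp

lemma main_reduction : ∀ (n : ℕ) (c : List CapCup), c.length ≤ n →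
    c.IsChain altRel →
    ((c.map CapCup.turn).sum = 2 ∨ (c.map CapCup.turn).sum = -2) →
    ∃ c'' : List CapCup, Relation.ReflTransGen delStep c c'' ∧
      (c'' = [CapCup.capR, CapCup.cupL] ∨ c'' = [CapCup.cupL, CapCup.capR] ∨
       c'' = [CapCup.capL, CapCup.cupR] ∨ c'' = [CapCup.cupR, CapCup.capL]) := by
  intro n
  induction n with
  | zero =>
    intro c hlen _ hsum
    have : c = [] := List.eq_nil_of_length_eq_zero (Nat.le_zero.1 hlen)
    subst this; simp at hsum
  | succ n ih =>
    intro c hlen hchain hsum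
    rcases pairs_or_const c with ⟨l, r, x, y, hxy, rfl⟩ | hc
    · have hchain' : (l ++ r).IsChain altRel := chain'_del l r x y hchain
      have hsum' : ((l ++ r).map CapCup.turn).sum =
          (((l ++ x :: y :: r)).map CapCup.turn).sum := by
        simp [List.sum_append]
        omega
      have hlen' : (l ++ r).length ≤ n := by
        simp at hlen ⊢; omega
      obtain ⟨c'', hsteps, hend⟩ := ih (l ++ r) hlen' hchain' (by rw [hsum']; exact hsum)
      exact ⟨c'', Relation.ReflTransGen.head
        (Or.inl ⟨l, r, x, y, hxy, rfl, rfl⟩) hsteps, hend⟩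
    · -- all turns equal; length must be 2
      rcases c with _ | ⟨a, t⟩
      · simp at hsum
      · have hall : ∀ z ∈ (a :: t).map CapCup.turn, z = a.turn := by
          intro z hz
          obtain ⟨u, hu, rfl⟩ := List.mem_map.1 hz
          exact hc u hu a (List.mem_cons_self)
        have hsum2 : ((a :: t).map CapCup.turn).sum =
            ((a :: t).map CapCup.turn).length • a.turn :=
          List.sum_eq_card_nsmul _ _ hall
        rw [List.length_map] at hsum2
        have hsmul : ((a :: t).length : ℤ) * a.turn = ((a :: t).map CapCup.turn).sum := by
          rw [hsum2, nsmul_eq_mul]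
        have hlen2 : (a :: t).length = 2 := by
          rcases a.turn_pm with h1 | h1 <;> rw [h1] at hsmul <;>
            rcases hsum with h2 | h2 <;> rw [h2] at hsmul <;> omega
        obtain ⟨x, y, hxy⟩ := List.length_eq_two.1 hlen2
        rw [hxy] at hchain hsum ⊢
        have halt2 : x.isCap ≠ y.isCap := (List.isChain_cons_cons.1 hchain).1
        refine ⟨[x, y], Relation.ReflTransGen.refl, ?_⟩
        clear hc hall hsum2 hsmul hlen hlen2 ih hxy hchain
        revert hsum halt2
        cases x <;> cases y <;> decide

/-- An alternating cap-cup cycle of turning number `±2` can be reduced, by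
repeatedly deleting cyclically adjacent pairs of opposite turning numbers, to a
cycle of length two: `(capR, cupL)` or `(capL, cupR)` (up to cyclic rotation). -/
theorem capCupCycle_reduction (c : List CapCup) (hne : c ≠ [])
    (halt : ∀ i : Fin c.length,
      (c.get i).isCap ≠ (c.get ⟨((i : ℕ) + 1) % c.length,
        Nat.mod_lt _ (List.length_pos_iff.mpr hne)⟩).isCap)
    (hsum : (c.map CapCup.turn).sum = 2 ∨ (c.map CapCup.turn).sum = -2) :
    ∃ c'' : List CapCup, Relation.ReflTransGen delStep c c'' ∧
      (c'' = [CapCup.capR, CapCup.cupL] ∨ c'' = [CapCup.cupL, CapCup.capR] ∨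
       c'' = [CapCup.capL, CapCup.cupR] ∨ c'' = [CapCup.cupR, CapCup.capL]) := by
  have hchain : c.IsChain altRel := by
    rw [List.isChain_iff_getElem]
    intro i hi
    have h := halt ⟨i, by omega⟩
    have hmod : ((i : ℕ) + 1) % c.length = i + 1 := Nat.mod_eq_of_lt (by omega)
    have hfin : (⟨((i : ℕ) + 1) % c.length,
        Nat.mod_lt _ (List.length_pos_iff.mpr hne)⟩ : Fin c.length) = ⟨i + 1, by omega⟩ :=
      Fin.ext hmod
    rw [hfin] at h
    exact h
  exact main_reduction c.length c le_rfl hchain hsum
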